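/- Limited loss of the Scaled Scoring Mechanism: let S : Δ → ℝᵏ be a scoring rule each of whose components S_i is concave on Δ. Fix an initial reference point q̄₀ ∈ Δ, reports q₁, …, q_m ∈ Δ, and scaling factors λ₁, …, λ_m ∈ [0,1], and define the reference points recursively by q̄_j = q̄_{j−1} + λ_j (q_j − q̄_{j−1}). Then for every outcome i, the total payment of the mechanism satisfies Σ_{j=1}^m λ_j (S_i(q_j) − S_i(q̄_{j−1})) ≤ S_i(q̄_m) − S_i(q̄₀); that is, the total SSM payout under any outcome is at most the payout of a market scoring rule whose forecast moves from q̄₀ to q̄_m. -/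

import Mathlib

open scoped BigOperators

noncomputable section

/-- The probability simplex over `k` outcomes. -/
def simplexK (k : ℕ) : Set (Fin k → ℝ) := {q | (∀ i, 0 ≤ q i) ∧ ∑ i, q i = 1}

/-- Dot product of two vectors in `ℝᵏ`. -/
def dotK {k : ℕ} (p s : Fin k → ℝ) : ℝ := ∑ i, p i * s i

/-- A scoring rule `S : Δ → ℝᵏ` is strictly proper if for all `p ≠ q` in the simplex,
`p·S(p) > p·S(q)`. -/
def StrictlyProperK {k : ℕ} (S : (Fin k → ℝ) → Fin k → ℝ) : Prop :=
  ∀ p ∈ simplexK k, ∀ q ∈ simplexK k, p ≠ q → dotK p (S q) < dotK p (S p)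

/-- limited loss of the Scaled Scoring Mechanism: let `S` be a scoring rule
whose components are concave on the simplex. Fix an initial reference point `q̄₀ = qbar 0 ∈ Δ`,
reports `q₁, …, q_m ∈ Δ` and scaling factors `λ₁, …, λ_m ∈ [0,1]`, and let the reference
points evolve by `q̄_j = q̄_{j−1} + λ_j (q_j − q̄_{j−1})`. Then under every outcome `i`, the
total SSM payout `Σ_j λ_j (S_i(q_j) − S_i(q̄_{j−1}))` is at most
`S_i(q̄_m) − S_i(q̄₀)`, the payout of a market scoring rule moving from `q̄₀` to `q̄_m`. -/
theorem stmt13 (k : ℕ) (hk : 2 ≤ k)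
    (S : (Fin k → ℝ) → Fin k → ℝ)
    (hconc : ∀ i : Fin k, ConcaveOn ℝ (simplexK k) (fun q => S q i))
    (m : ℕ) (q : Fin m → Fin k → ℝ) (hq : ∀ j, q j ∈ simplexK k)
    (l : Fin m → ℝ) (hl : ∀ j, l j ∈ Set.Icc (0:ℝ) 1)
    (qbar : Fin (m + 1) → Fin k → ℝ) (hqbar0 : qbar 0 ∈ simplexK k)
    (hrec : ∀ j : Fin m, qbar j.succ = qbar j.castSucc + l j • (q j - qbar j.castSucc))
    (i : Fin k) :
    ∑ j : Fin m, l j * (S (q j) i - S (qbar j.castSucc) i) ≤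
      S (qbar (Fin.last m)) i - S (qbar 0) i := by
  have hsimp : simplexK k = stdSimplex ℝ (Fin k) := rfl
  have hconv : Convex ℝ (simplexK k) := by rw [hsimp]; exact convex_stdSimplex ℝ (Fin k)
  set g : Fin m → ℝ := fun j => l j * (S (q j) i - S (qbar j.castSucc) i) with hg
  set gN : ℕ → ℝ := fun n => if h : n < m then g ⟨n, h⟩ else 0 with hgN
  have key : ∀ n, ∀ h : n ≤ m,
      qbar ⟨n, Nat.lt_succ_of_le h⟩ ∈ simplexK k ∧
      ∑ t ∈ Finset.range n, gN t ≤ S (qbar ⟨n, Nat.lt_succ_of_le h⟩) i - S (qbar 0) i := by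
    intro n
    induction n with
    | zero =>
      intro h
      constructor
      · exact hqbar0
      · simp
    | succ n ih =>
      intro h
      have hnm : n < m := h
      obtain ⟨hmem, hsum⟩ := ih (Nat.le_of_lt hnm)
      set j : Fin m := ⟨n, hnm⟩ with hj
      have hcast : j.castSucc = (⟨n, Nat.lt_succ_of_le (Nat.le_of_lt hnm)⟩ : Fin (m+1)) := rfl
      have hsucc : j.succ = (⟨n+1, Nat.lt_succ_of_le h⟩ : Fin (m+1)) := rfl
      have hcombo : qbar j.succ = (1 - l j) • qbar j.castSucc + l j • q j := by
        rw [hrec j]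
        funext x
        simp only [Pi.add_apply, Pi.smul_apply, Pi.sub_apply, smul_eq_mul]
        ring
      have hl0 : 0 ≤ l j := (hl j).1
      have hl1 : l j ≤ 1 := (hl j).2
      have hmem' : qbar j.castSucc ∈ simplexK k := by rw [hcast]; exact hmem
      have hmemsucc : qbar j.succ ∈ simplexK k := by
        rw [hcombo]
        exact hconv hmem' (hq j) (by linarith) hl0 (by ring)
      have hstep : (1 - l j) * S (qbar j.castSucc) i + l j * S (q j) i ≤ S (qbar j.succ) i := by
        rw [hcombo]
        exact (hconc i).2 hmem' (hq j) (by linarith) hl0 (by ring)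
      constructor
      · rw [← hsucc]; exact hmemsucc
      · rw [Finset.sum_range_succ]
        have hgn : gN n = g j := by simp [hgN, hnm]; rfl
        have : g j ≤ S (qbar j.succ) i - S (qbar j.castSucc) i := by
          simp only [hg]
          nlinarith [hstep]
        rw [hgn, hcast] at *
        rw [← hsucc]
        linarith [this]
  have hfin : ∑ j : Fin m, g j = ∑ t ∈ Finset.range m, gN t := by
    rw [Finset.sum_range fun t => gN t]
    exact Finset.sum_congr rfl fun t _ => by simp [hgN, t.isLt]
  have hlast : (⟨m, Nat.lt_succ_of_le le_rfl⟩ : Fin (m+1)) = Fin.last m := rfl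
  have := (key m le_rfl).2
  rw [hlast] at this
  calc ∑ j : Fin m, g j = ∑ t ∈ Finset.range m, gN t := hfin
    _ ≤ S (qbar (Fin.last m)) i - S (qbar 0) i := this
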